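/- Let f ∈ ℤ[x] be a monic irreducible polynomial of degree 2k with k > 1 which has exactly 2k−2 roots on the unit circle. Then the two roots of f of modulus different from 1 are real, and they are of the form r and 1/r for some real r. -/

import Mathlib

open Polynomial

/-- If `f ∈ ℤ[x]` is monic irreducible of degree `2k`, `k > 1`, with exactly `2k-2`
roots on the unit circle (with multiplicity), then its two roots of modulus `≠ 1`
are real, of the form `r` and `1/r`. -/
theorem roots_off_circle_real_reciprocal (f : Polynomial ℤ) (k : ℕ) (hk : 1 < k)
    (hmonic : f.Monic) (hirr : Irreducible f) (hdeg : f.natDegree = 2 * k)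
    (hcirc : (Multiset.filter (fun z => ‖z‖ = 1)
        ((f.map (Int.castRingHom ℂ)).roots)).card = 2 * k - 2) :
    ∃ r : ℝ, r ≠ 0 ∧
      Multiset.filter (fun z => ‖z‖ ≠ 1) ((f.map (Int.castRingHom ℂ)).roots) =
        {((r : ℂ)), ((r : ℂ)⁻¹)} := by
  classical
  set F := f.map (Int.castRingHom ℂ) with hF
  have hf0 : f ≠ 0 := hmonic.ne_zero
  have hFmonic : F.Monic := hmonic.map _
  have hF0 : F ≠ 0 := hFmonic.ne_zero
  have hFdeg : F.natDegree = 2 * k := by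
    rw [hF, hmonic.natDegree_map, hdeg]
  -- nonzero constant coefficient
  have hc0 : f.coeff 0 ≠ 0 := by
    intro h
    obtain ⟨g, hg⟩ := (X_dvd_iff).mpr h
    rcases hirr.isUnit_or_isUnit hg with h1 | h2
    · exact Polynomial.not_isUnit_X h1
    · have hg0 : g ≠ 0 := by rintro rfl; simp at hg; exact hf0 hg
      have := natDegree_eq_zero_of_isUnit h2
      have : f.natDegree = 1 := by
        rw [hg, natDegree_mul X_ne_zero hg0, natDegree_X, this]
      omega
  -- the rational version
  set fq := f.map (Int.castRingHom ℚ) with hfq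
  have hfqmonic : fq.Monic := hmonic.map _
  have hfqirr : Irreducible fq :=
    (Polynomial.IsPrimitive.Int.irreducible_iff_irreducible_map_cast hmonic.isPrimitive).mp hirr
  have hFfq : F = fq.map (algebraMap ℚ ℂ) := by
    have h : (algebraMap ℚ ℂ).comp (Int.castRingHom ℚ) = Int.castRingHom ℂ :=
      Subsingleton.elim _ _
    rw [hF, hfq, Polynomial.map_map, h]
  have hroot_iff : ∀ z : ℂ, F.eval z = Polynomial.eval₂ (algebraMap ℚ ℂ) z fq := by
    intro z; rw [hFfq, eval_map]
  -- conjugation closure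
  have hconjF : F.map (starRingEnd ℂ) = F := by
    have h : (starRingEnd ℂ).comp (Int.castRingHom ℂ) = Int.castRingHom ℂ :=
      Subsingleton.elim _ _
    rw [hF, Polynomial.map_map, h]
  have hconj : ∀ z ∈ F.roots, (starRingEnd ℂ) z ∈ F.roots := by
    intro z hz
    rw [mem_roots hF0] at hz ⊢
    have : ((F.map (starRingEnd ℂ)).eval ((starRingEnd ℂ) z)) = (starRingEnd ℂ) (F.eval z) := by
      rw [eval_map, Polynomial.eval₂_hom]
    rw [hconjF] at this
    unfold Polynomial.IsRoot
    rw [this, hz, map_zero]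
  -- a root on the circle exists
  have hcirc_pos : 0 < (Multiset.filter (fun z => ‖z‖ = 1) F.roots).card := by
    rw [hcirc]; omega
  obtain ⟨w, hw⟩ := Multiset.card_pos_iff_exists_mem.mp hcirc_pos
  obtain ⟨hwroot, hwabs⟩ := Multiset.mem_filter.mp hw
  have hw0 : w ≠ 0 := by
    intro h; rw [h] at hwabs; simp at hwabs
  have hwconj : (starRingEnd ℂ) w = w⁻¹ := by
    apply eq_inv_of_mul_eq_one_left
    rw [mul_comm, Complex.mul_conj, Complex.normSq_eq_norm_sq, hwabs]
    norm_num
  -- w is a root of fq, hence fq is its minimal polynomial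
  have hwq : Polynomial.eval₂ (algebraMap ℚ ℂ) w fq = 0 := by
    rw [← hroot_iff]; exact (mem_roots hF0).mp hwroot |>.eq_zero ▸ rfl
  have hwinvq : Polynomial.eval₂ (algebraMap ℚ ℂ) w⁻¹ fq = 0 := by
    have := hconj w hwroot
    rw [hwconj] at this
    rw [← hroot_iff]
    exact (mem_roots hF0).mp this |>.eq_zero ▸ rfl
  have hmin : minpoly ℚ w = fq :=
    (minpoly.eq_of_irreducible_of_monic hfqirr (by rwa [aeval_def]) hfqmonic).symm
  -- fq divides its reverse
  haveI : Invertible (w⁻¹) := invertibleOfNonzero (inv_ne_zero hw0)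
  have hrev : Polynomial.aeval w fq.reverse = 0 := by
    have h := Polynomial.eval₂_reverse_eq_zero_iff (algebraMap ℚ ℂ) (w⁻¹) fq
    rw [invOf_eq_inv, inv_inv] at h
    rw [aeval_def]
    exact h.mpr hwinvq
  have hdvd : fq ∣ fq.reverse := by
    have hint : IsIntegral ℚ w := ⟨fq, hfqmonic, by rwa [← aeval_def] at hwq⟩
    have := minpoly.dvd ℚ w hrev
    rwa [hmin] at this
  obtain ⟨q, hq⟩ := hdvd
  -- inversion closure of roots
  have hinvroot : ∀ z ∈ F.roots, z ≠ 0 → z⁻¹ ∈ F.roots := by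
    intro z hz hz0
    have hzq : Polynomial.eval₂ (algebraMap ℚ ℂ) z fq = 0 := by
      rw [← hroot_iff]; exact (mem_roots hF0).mp hz |>.eq_zero ▸ rfl
    have hzrev : Polynomial.eval₂ (algebraMap ℚ ℂ) z fq.reverse = 0 := by
      rw [hq, eval₂_mul, hzq, zero_mul]
    haveI : Invertible (z⁻¹) := invertibleOfNonzero (inv_ne_zero hz0)
    have h := Polynomial.eval₂_reverse_eq_zero_iff (algebraMap ℚ ℂ) (z⁻¹) fq
    rw [invOf_eq_inv, inv_inv] at h
    rw [mem_roots hF0]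
    unfold Polynomial.IsRoot
    rw [hroot_iff]
    exact h.mp hzrev
  -- the off-circle multiset has two elements
  have hcardR : F.roots.card = 2 * k := by
    have hs : F.Splits := IsAlgClosed.splits F
    rw [(splits_iff_card_roots).mp hs, hFdeg]
  have hcardS : (Multiset.filter (fun z => ‖z‖ ≠ 1) F.roots).card = 2 := by
    have h2 : (Multiset.filter (fun z => ‖z‖ = 1) F.roots).card
        + (Multiset.filter (fun z => ¬ ‖z‖ = 1) F.roots).card = F.roots.card := by
      rw [← Multiset.card_add, Multiset.filter_add_not]
    simp only [Ne] at *
    omega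
  obtain ⟨α, β, hS⟩ := Multiset.card_eq_two.mp hcardS
  have hαS : α ∈ Multiset.filter (fun z => ‖z‖ ≠ 1) F.roots := by
    rw [hS]; simp
  obtain ⟨hαroot, hαabs⟩ := Multiset.mem_filter.mp hαS
  have hα0 : α ≠ 0 := by
    intro h
    have : F.eval 0 = 0 := by
      have := (mem_roots hF0).mp hαroot
      rwa [h] at this
    rw [← coeff_zero_eq_eval_zero, hF, coeff_map] at this
    exact hc0 (by simpa using this)
  have habsne : ∀ z : ℂ, ‖z‖ ≠ 1 → z * (starRingEnd ℂ) z ≠ 1 := by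
    intro z hz h
    apply hz
    have hn : ((Complex.normSq z : ℝ) : ℂ) = 1 := by rw [← Complex.mul_conj]; exact h
    have hn' : Complex.normSq z = 1 := by exact_mod_cast hn
    have h3 : ‖z‖ ^ 2 = 1 := by rw [← Complex.normSq_eq_norm_sq]; exact hn'
    have h4 : 0 ≤ ‖z‖ := norm_nonneg z
    nlinarith
  -- α⁻¹ is in the off-circle multiset
  have hαinvS : α⁻¹ ∈ Multiset.filter (fun z => ‖z‖ ≠ 1) F.roots := by
    refine Multiset.mem_filter.mpr ⟨hinvroot α hαroot hα0, ?_⟩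
    rw [norm_inv]
    intro h
    exact hαabs (by rwa [inv_eq_one] at h)
  have hβ : β = α⁻¹ := by
    rw [hS] at hαinvS
    rcases Multiset.mem_cons.mp hαinvS with h | h
    · exfalso
      have : α * α = 1 := by
        nth_rewrite 1 [← h]
        exact inv_mul_cancel₀ hα0
      have : ‖α‖ ^ 2 = 1 := by
        have := congrArg norm this
        rwa [norm_mul, ← sq, norm_one] at this
      have h4 : 0 ≤ ‖α‖ := norm_nonneg α
      rcases lt_or_gt_of_ne hαabs with hlt | hgt <;> nlinarith
    · rw [Multiset.mem_singleton] at h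
      exact h.symm
  -- conj α is in the off-circle multiset
  have hconjS : (starRingEnd ℂ) α ∈ Multiset.filter (fun z => ‖z‖ ≠ 1) F.roots := by
    refine Multiset.mem_filter.mpr ⟨hconj α hαroot, ?_⟩
    rwa [Complex.norm_conj]
  have hre : ((α.re : ℝ) : ℂ) = α := by
    rw [hS] at hconjS
    rcases Multiset.mem_cons.mp hconjS with h | h
    · exact Complex.conj_eq_iff_re.mp h
    · exfalso
      rw [Multiset.mem_singleton, hβ] at h
      have : α * (starRingEnd ℂ) α = 1 := by
        rw [h, mul_inv_cancel₀ hα0]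
      exact habsne α hαabs this
  refine ⟨α.re, ?_, ?_⟩
  · intro h
    apply hα0
    rw [← hre, h]
    simp
  · rw [hS, hβ, hre]
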